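/- Let ν > 0 and let g : ℝ → ℝ be continuous with compact support. Define θ₀(y) = exp(−(1/(2ν)) ∫₀^y g(s) ds) and, for x ∈ ℝ and t > 0, u(x,t) = [∫_{-∞}^{∞} ((x−y)/t) e^{−(x−y)²/(4νt)} θ₀(y) dy] / [∫_{-∞}^{∞} e^{−(x−y)²/(4νt)} θ₀(y) dy]. Then ‖u(·,t)‖_{L^∞(ℝ)} = O(t^{−1/2}) as t → ∞; that is, there exist C > 0 and T > 0 such that for all t ≥ T and all x ∈ ℝ, |u(x,t)| ≤ C t^{−1/2}. -/

import Mathlib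

open Set MeasureTheory Real

lemma hc_key (b : ℝ) (hb : 0 < b) (z : ℝ) :
    |z| * Real.exp (-z ^ 2 / b) ≤ Real.sqrt b * Real.exp (-z ^ 2 / (2 * b)) := by
  have hsb : 0 < Real.sqrt b := Real.sqrt_pos.mpr hb
  have hs2 : (|z| / Real.sqrt b) ^ 2 = z ^ 2 / b := by
    rw [div_pow, sq_abs, Real.sq_sqrt hb.le]
  have h1 : |z| / Real.sqrt b ≤ Real.exp (z ^ 2 / (2 * b)) := by
    have he := Real.add_one_le_exp (z ^ 2 / (2 * b))
    have hw : z ^ 2 / (2 * b) = (|z| / Real.sqrt b) ^ 2 / 2 := by rw [hs2]; ring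
    rw [hw] at he ⊢
    nlinarith [sq_nonneg (|z| / Real.sqrt b - 1)]
  have h2 : |z| ≤ Real.sqrt b * Real.exp (z ^ 2 / (2 * b)) := by
    rw [div_le_iff₀ hsb] at h1; linarith [h1]
  calc |z| * Real.exp (-z ^ 2 / b)
      ≤ (Real.sqrt b * Real.exp (z ^ 2 / (2 * b))) * Real.exp (-z ^ 2 / b) :=
        mul_le_mul_of_nonneg_right h2 (Real.exp_pos _).le
    _ = Real.sqrt b * Real.exp (-z ^ 2 / (2 * b)) := by
        rw [mul_assoc, ← Real.exp_add]
        congr 1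
        field_simp
        ring

lemma hc_gauss_integrable (c : ℝ) (hc : 0 < c) (x : ℝ) :
    Integrable (fun y => Real.exp (-(x - y) ^ 2 / c)) := by
  have h : ∀ z : ℝ, -z ^ 2 / c = -c⁻¹ * z ^ 2 := fun z => by field_simp
  simp_rw [h]
  exact (integrable_exp_neg_mul_sq (inv_pos.mpr hc)).comp_sub_left x

lemma hc_gauss_integral (c : ℝ) (hc : 0 < c) (x : ℝ) :
    ∫ y : ℝ, Real.exp (-(x - y) ^ 2 / c) = Real.sqrt (π * c) := by
  have h : ∀ z : ℝ, -z ^ 2 / c = -c⁻¹ * z ^ 2 := fun z => by field_simp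
  simp_rw [h]
  rw [integral_sub_left_eq_self (fun z => Real.exp (-c⁻¹ * z ^ 2)) volume x,
    integral_gaussian, div_inv_eq_mul]

/-- **L^∞ decay.** For `ν > 0` and `g` continuous with compact support, the Hopf–Cole
solution satisfies `‖u(·,t)‖_{L^∞(ℝ)} = O(t^{-1/2})` as `t → ∞`. -/
theorem hopf_cole_solution_Linfty_decay
    (ν : ℝ) (hν : 0 < ν)
    (g : ℝ → ℝ) (hcont : Continuous g) (hsupp : HasCompactSupport g)
    (θ₀ : ℝ → ℝ)
    (hθ₀ : ∀ y : ℝ, θ₀ y = Real.exp (-(1 / (2 * ν)) * ∫ s in (0:ℝ)..y, g s))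
    (u : ℝ → ℝ → ℝ)
    (hu : ∀ x t : ℝ, 0 < t →
      u x t = (∫ y : ℝ, ((x - y) / t) * Real.exp (-(x - y) ^ 2 / (4 * ν * t)) * θ₀ y) /
              (∫ y : ℝ, Real.exp (-(x - y) ^ 2 / (4 * ν * t)) * θ₀ y)) :
    ∃ C T : ℝ, 0 < C ∧ 0 < T ∧ ∀ t : ℝ, T ≤ t → ∀ x : ℝ,
      |u x t| ≤ C * t ^ (-(1:ℝ)/2) := by
  have hgI : Integrable g := hcont.integrable_of_hasCompactSupport hsupp
  set B : ℝ := ∫ s : ℝ, |g s| with hBdef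
  have hB0 : 0 ≤ B := integral_nonneg fun _ => abs_nonneg _
  have hIb : ∀ y : ℝ, |∫ s in (0:ℝ)..y, g s| ≤ B := by
    intro y
    calc |∫ s in (0:ℝ)..y, g s| = ‖∫ s in (0:ℝ)..y, g s‖ := (Real.norm_eq_abs _).symm
      _ ≤ ∫ s in Set.uIoc (0:ℝ) y, ‖g s‖ :=
          intervalIntegral.norm_integral_le_integral_norm_uIoc
      _ ≤ B := by
          simp only [Real.norm_eq_abs]
          exact setIntegral_le_integral hgI.abs
            (Filter.Eventually.of_forall fun _ => abs_nonneg _)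
  set M : ℝ := Real.exp (B / (2 * ν)) with hMdef
  set m : ℝ := Real.exp (-(B / (2 * ν))) with hmdef
  have hm : 0 < m := Real.exp_pos _
  have hM : 0 < M := Real.exp_pos _
  have hexpb : ∀ y : ℝ, |(-(1 / (2 * ν))) * (∫ s in (0:ℝ)..y, g s)| ≤ B / (2 * ν) := by
    intro y
    rw [abs_mul, abs_neg, abs_of_pos (by positivity : (0:ℝ) < 1 / (2 * ν))]
    calc 1 / (2 * ν) * |∫ s in (0:ℝ)..y, g s| ≤ 1 / (2 * ν) * B := by
          exact mul_le_mul_of_nonneg_left (hIb y) (by positivity)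
      _ = B / (2 * ν) := by ring
  have hθm : ∀ y : ℝ, m ≤ θ₀ y := by
    intro y
    rw [hθ₀ y, hmdef]
    exact Real.exp_le_exp.mpr (abs_le.mp (hexpb y)).1
  have hθM : ∀ y : ℝ, θ₀ y ≤ M := by
    intro y
    rw [hθ₀ y, hMdef]
    exact Real.exp_le_exp.mpr (abs_le.mp (hexpb y)).2
  have hθpos : ∀ y : ℝ, 0 < θ₀ y := fun y => lt_of_lt_of_le hm (hθm y)
  have hθc : Continuous θ₀ := by
    have h : θ₀ = fun y => Real.exp (-(1 / (2 * ν)) * ∫ s in (0:ℝ)..y, g s) := funext hθ₀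
    rw [h]
    exact Real.continuous_exp.comp (continuous_const.mul (hgI.continuous_primitive 0))
  refine ⟨M * Real.sqrt (4 * ν) * Real.sqrt (8 * π * ν) / (m * Real.sqrt (4 * π * ν)), 1,
    by positivity, one_pos, ?_⟩
  intro t ht x
  have ht0 : (0:ℝ) < t := lt_of_lt_of_le one_pos ht
  rw [hu x t ht0]
  set b : ℝ := 4 * ν * t with hbdef
  have hb : 0 < b := by rw [hbdef]; positivity
  have h2b : (0:ℝ) < 2 * b := by positivity
  have hG1 : Integrable (fun y => Real.exp (-(x - y) ^ 2 / b)) := hc_gauss_integrable b hb x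
  have hG2 : Integrable (fun y => Real.exp (-(x - y) ^ 2 / (2 * b))) :=
    hc_gauss_integrable (2 * b) h2b x
  have hθsm := hθc.aestronglyMeasurable (μ := (volume : Measure ℝ))
  have hbdd : ∃ Cb, ∀ y : ℝ, ‖θ₀ y‖ ≤ Cb :=
    ⟨M, fun y => by rw [Real.norm_eq_abs, abs_of_pos (hθpos y)]; exact hθM y⟩
  have hDint : Integrable (fun y => Real.exp (-(x - y) ^ 2 / b) * θ₀ y) := by
    have h := hG1.bdd_mul hθsm (Filter.Eventually.of_forall hbdd.choose_spec)
    simpa [mul_comm] using h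
  have hDlb : m * Real.sqrt (π * b) ≤ ∫ y : ℝ, Real.exp (-(x - y) ^ 2 / b) * θ₀ y := by
    have h1 : ∫ y : ℝ, m * Real.exp (-(x - y) ^ 2 / b) = m * Real.sqrt (π * b) := by
      rw [integral_const_mul _, hc_gauss_integral b hb x]
    rw [← h1]
    refine integral_mono (hG1.const_mul m) hDint fun y => ?_
    calc m * Real.exp (-(x - y) ^ 2 / b)
        ≤ θ₀ y * Real.exp (-(x - y) ^ 2 / b) :=
          mul_le_mul_of_nonneg_right (hθm y) (Real.exp_pos _).le
      _ = Real.exp (-(x - y) ^ 2 / b) * θ₀ y := mul_comm _ _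
  have hDpos : 0 < ∫ y : ℝ, Real.exp (-(x - y) ^ 2 / b) * θ₀ y :=
    lt_of_lt_of_le (by positivity) hDlb
  have hNub : |∫ y : ℝ, ((x - y) / t) * Real.exp (-(x - y) ^ 2 / b) * θ₀ y|
      ≤ (M / t) * (Real.sqrt b * Real.sqrt (π * (2 * b))) := by
    have hdom : Integrable
        (fun y => (M / t) * (Real.sqrt b * Real.exp (-(x - y) ^ 2 / (2 * b)))) :=
      (hG2.const_mul (Real.sqrt b)).const_mul (M / t)
    calc |∫ y : ℝ, ((x - y) / t) * Real.exp (-(x - y) ^ 2 / b) * θ₀ y|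
        = ‖∫ y : ℝ, ((x - y) / t) * Real.exp (-(x - y) ^ 2 / b) * θ₀ y‖ :=
          (Real.norm_eq_abs _).symm
      _ ≤ ∫ y : ℝ, ‖((x - y) / t) * Real.exp (-(x - y) ^ 2 / b) * θ₀ y‖ :=
          norm_integral_le_integral_norm _
      _ ≤ ∫ y : ℝ, (M / t) * (Real.sqrt b * Real.exp (-(x - y) ^ 2 / (2 * b))) := by
          refine integral_mono_of_nonneg
            (Filter.Eventually.of_forall fun y => norm_nonneg _) hdom
            (Filter.Eventually.of_forall fun y => ?_)
          dsimp only
          have h1 : ‖((x - y) / t) * Real.exp (-(x - y) ^ 2 / b) * θ₀ y‖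
              = (|x - y| / t) * Real.exp (-(x - y) ^ 2 / b) * θ₀ y := by
            rw [Real.norm_eq_abs, abs_mul, abs_mul, abs_div, abs_of_pos ht0,
              abs_of_pos (Real.exp_pos _), abs_of_pos (hθpos y)]
          rw [h1]
          have hk := hc_key b hb (x - y)
          calc (|x - y| / t) * Real.exp (-(x - y) ^ 2 / b) * θ₀ y
              = (|x - y| * Real.exp (-(x - y) ^ 2 / b)) * θ₀ y * t⁻¹ := by ring
            _ ≤ (Real.sqrt b * Real.exp (-(x - y) ^ 2 / (2 * b))) * M * t⁻¹ := by
                refine mul_le_mul_of_nonneg_right ?_ (inv_nonneg.mpr ht0.le)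
                exact mul_le_mul hk (hθM y) (hθpos y).le (by positivity)
            _ = (M / t) * (Real.sqrt b * Real.exp (-(x - y) ^ 2 / (2 * b))) := by ring
      _ = (M / t) * (Real.sqrt b * Real.sqrt (π * (2 * b))) := by
          rw [integral_const_mul _, integral_const_mul _, hc_gauss_integral (2 * b) h2b x]
  calc |(∫ y : ℝ, ((x - y) / t) * Real.exp (-(x - y) ^ 2 / b) * θ₀ y) /
        (∫ y : ℝ, Real.exp (-(x - y) ^ 2 / b) * θ₀ y)|
      = |∫ y : ℝ, ((x - y) / t) * Real.exp (-(x - y) ^ 2 / b) * θ₀ y| /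
        (∫ y : ℝ, Real.exp (-(x - y) ^ 2 / b) * θ₀ y) := by
        rw [abs_div, abs_of_pos hDpos]
    _ ≤ ((M / t) * (Real.sqrt b * Real.sqrt (π * (2 * b)))) / (m * Real.sqrt (π * b)) :=
        div_le_div₀ (by positivity) hNub (by positivity) hDlb
    _ = M * Real.sqrt (4 * ν) * Real.sqrt (8 * π * ν) / (m * Real.sqrt (4 * π * ν)) *
        t ^ (-(1:ℝ)/2) := by
        have hrp : t ^ (-(1:ℝ)/2) = (Real.sqrt t)⁻¹ := by
          rw [show (-(1:ℝ)/2) = -(1/2) by norm_num, Real.rpow_neg ht0.le,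
            ← Real.sqrt_eq_rpow]
        have h1 : Real.sqrt b = Real.sqrt (4 * ν) * Real.sqrt t := by
          rw [hbdef]; exact Real.sqrt_mul (by positivity) t
        have h2 : Real.sqrt (π * (2 * b)) = Real.sqrt (8 * π * ν) * Real.sqrt t := by
          rw [hbdef, show π * (2 * (4 * ν * t)) = (8 * π * ν) * t by ring]
          exact Real.sqrt_mul (by positivity) t
        have h3 : Real.sqrt (π * b) = Real.sqrt (4 * π * ν) * Real.sqrt t := by
          rw [hbdef, show π * (4 * ν * t) = (4 * π * ν) * t by ring]
          exact Real.sqrt_mul (by positivity) t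
        rw [h1, h2, h3, hrp]
        have hst : Real.sqrt t * Real.sqrt t = t := Real.mul_self_sqrt ht0.le
        have hs0 : Real.sqrt t ≠ 0 := (Real.sqrt_pos.mpr ht0).ne'
        have h4πν : Real.sqrt (4 * π * ν) ≠ 0 :=
          (Real.sqrt_pos.mpr (by positivity)).ne'
        have e1 : M / t * (Real.sqrt (4 * ν) * Real.sqrt t *
              (Real.sqrt (8 * π * ν) * Real.sqrt t))
            = M * Real.sqrt (4 * ν) * Real.sqrt (8 * π * ν) := by
          have e0 : Real.sqrt (4 * ν) * Real.sqrt t * (Real.sqrt (8 * π * ν) * Real.sqrt t)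
              = Real.sqrt (4 * ν) * Real.sqrt (8 * π * ν) * (Real.sqrt t * Real.sqrt t) := by
            ring
          rw [e0, hst, div_mul_eq_mul_div, mul_div_assoc, mul_div_assoc,
            div_self ht0.ne', mul_one]
          ring
        rw [e1, ← div_eq_mul_inv, div_div]
        ring
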